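/- For any measurable m : Ω → [0,1], sup over segmentations s of A_m(s) equals sup over v ∈ [0,1] of a_m(v) := v + 1 - ‖m‖₁ - 2∫₀^v F_m⁻¹(u) du, where A_m(s) = ∫ (s·m + (1-s)(1-m)) dλ. -/

import Mathlib

open MeasureTheory Set

noncomputable section

/-- Normalized Lebesgue measure on the unit cube `[0,1]^n`. -/
def cubeMeasure (n : ℕ) : Measure (Fin n → ℝ) :=
  volume.restrict (Set.univ.pi fun _ => Set.Icc (0:ℝ) 1)

/-- A segmentation: a measurable `{0,1}`-valued function on the cube. -/
def IsSeg {n : ℕ} (s : (Fin n → ℝ) → ℝ) : Prop :=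
  Measurable s ∧ ∀ ω, s ω = 0 ∨ s ω = 1

/-- A marginal function: a measurable `[0,1]`-valued function on the cube. -/
def IsMarg {n : ℕ} (m : (Fin n → ℝ) → ℝ) : Prop :=
  Measurable m ∧ ∀ ω, m ω ∈ Set.Icc (0:ℝ) 1

/-- The volume `‖f‖₁ = ∫ f dλ` (for nonnegative `f`). -/
def vol {n : ℕ} (f : (Fin n → ℝ) → ℝ) : ℝ := ∫ ω, f ω ∂(cubeMeasure n)

/-- `F_m(t) = λ({ω : 1 - m(ω) ≤ t})`. -/
def Fcdf {n : ℕ} (m : (Fin n → ℝ) → ℝ) (t : ℝ) : ℝ :=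
  ((cubeMeasure n) {ω | 1 - m ω ≤ t}).toReal

/-- The left limit `F_m(t-) = λ({ω : 1 - m(ω) < t})`. -/
def FcdfMinus {n : ℕ} (m : (Fin n → ℝ) → ℝ) (t : ℝ) : ℝ :=
  ((cubeMeasure n) {ω | 1 - m ω < t}).toReal

/-- The generalized inverse (quantile function) `F_m⁻¹(v) = inf{t ∈ [0,1] : F_m(t) ≥ v}`. -/
def Finv {n : ℕ} (m : (Fin n → ℝ) → ℝ) (v : ℝ) : ℝ :=
  sInf {t | t ∈ Set.Icc (0:ℝ) 1 ∧ v ≤ Fcdf m t}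

/-- Accuracy. -/
def Accu {n : ℕ} (m s : (Fin n → ℝ) → ℝ) : ℝ :=
  ∫ ω, (s ω * m ω + (1 - s ω) * (1 - m ω)) ∂(cubeMeasure n)

/-- The function `a_m`. -/
def aFun {n : ℕ} (m : (Fin n → ℝ) → ℝ) (v : ℝ) : ℝ :=
  v + 1 - vol m - 2 * ∫ u in (0:ℝ)..v, Finv m u

-- ==================== auxiliary lemmas ====================

instance cube_prob (n : ℕ) : IsProbabilityMeasure (cubeMeasure n) := by
  constructor
  rw [cubeMeasure, Measure.restrict_apply_univ, volume_pi_pi]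
  simp [Real.volume_Icc]

variable {n : ℕ} {m : (Fin n → ℝ) → ℝ}

lemma Fcdf_mono : Monotone (Fcdf m) := by
  intro a b hab
  apply ENNReal.toReal_mono (measure_ne_top _ _)
  exact measure_mono (fun ω hω => le_trans hω hab)

lemma Fcdf_nonneg (t : ℝ) : 0 ≤ Fcdf m t := ENNReal.toReal_nonneg

lemma Fcdf_le_one (t : ℝ) : Fcdf m t ≤ 1 := by
  have h := prob_le_one (μ := cubeMeasure n) (s := {ω | 1 - m ω ≤ t})
  simpa [Fcdf] using ENNReal.toReal_mono ENNReal.one_ne_top h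

lemma Fcdf_one (hm : IsMarg m) : Fcdf m 1 = 1 := by
  have : {ω | 1 - m ω ≤ (1:ℝ)} = univ := by
    ext ω; simp [sub_le_iff_le_add]
    linarith [(hm.2 ω).1]
  rw [Fcdf, this, measure_univ]; simp

lemma Finv_nonneg (v : ℝ) : 0 ≤ Finv m v :=
  Real.sInf_nonneg (fun _ hx => hx.1.1)

lemma Finv_le_one (hm : IsMarg m) {v : ℝ} (hv : v ≤ 1) : Finv m v ≤ 1 := by
  apply csInf_le ⟨0, fun _ hx => hx.1.1⟩
  exact ⟨⟨zero_le_one, le_refl 1⟩, by rw [Fcdf_one hm]; exact hv⟩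

lemma Fcdf_right (hm : IsMarg m) {v r : ℝ} (h : ∀ t, r < t → v ≤ Fcdf m t) :
    v ≤ Fcdf m r := by
  have hmeas : ∀ c : ℝ, MeasurableSet {ω : Fin n → ℝ | 1 - m ω ≤ c} := fun c =>
    measurableSet_le (measurable_const.sub hm.1) measurable_const
  set s : ℕ → Set (Fin n → ℝ) := fun k => {ω | 1 - m ω ≤ r + 1/(k+1)} with hs
  have hanti : Antitone s := by
    intro k k' hk ω hω
    simp only [hs, mem_setOf_eq] at hω ⊢
    have hc : ((k:ℝ)+1) ≤ ((k':ℝ)+1) := by exact_mod_cast add_le_add_left (Nat.cast_le.2 hk) 1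
    have : (1:ℝ)/(k'+1) ≤ 1/(k+1) := one_div_le_one_div_of_le (by positivity) hc
    linarith
  have hint : ⋂ k, s k = {ω | 1 - m ω ≤ r} := by
    ext ω
    simp only [mem_iInter, hs, mem_setOf_eq]
    constructor
    · intro hk
      by_contra hc
      push_neg at hc
      obtain ⟨k, hk'⟩ := exists_nat_one_div_lt (sub_pos.2 hc)
      have := hk k
      linarith
    · intro h0 k
      have : (0:ℝ) < 1/(k+1) := by positivity
      linarith
  have htd := tendsto_measure_iInter_atTop (μ := cubeMeasure n)
    (fun k => (hmeas _).nullMeasurableSet) hanti ⟨0, measure_ne_top _ _⟩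
  rw [hint] at htd
  have htd2 : Filter.Tendsto (fun k => ((cubeMeasure n) (s k)).toReal) Filter.atTop
      (nhds ((cubeMeasure n) {ω | 1 - m ω ≤ r}).toReal) :=
    (ENNReal.tendsto_toReal (measure_ne_top _ _)).comp htd
  exact ge_of_tendsto' htd2 (fun k => h _ (lt_add_of_pos_right r (by positivity)))

lemma le_Fcdf_Finv (hm : IsMarg m) {v : ℝ} (hv : v ≤ 1) : v ≤ Fcdf m (Finv m v) := by
  apply Fcdf_right hm
  intro t ht
  have hne : {t | t ∈ Set.Icc (0:ℝ) 1 ∧ v ≤ Fcdf m t}.Nonempty :=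
    ⟨1, ⟨zero_le_one, le_refl 1⟩, by rw [Fcdf_one hm]; exact hv⟩
  obtain ⟨s, hs, hst⟩ := exists_lt_of_csInf_lt hne ht
  exact le_trans hs.2 (Fcdf_mono hst.le)

lemma Finv_le_iff (hm : IsMarg m) {v t : ℝ} (hv : v ≤ 1) (ht : t ∈ Set.Icc (0:ℝ) 1) :
    Finv m v ≤ t ↔ v ≤ Fcdf m t := by
  constructor
  · intro h
    exact le_trans (le_Fcdf_Finv hm hv) (Fcdf_mono h)
  · intro h
    exact csInf_le ⟨0, fun _ hx => hx.1.1⟩ ⟨ht, h⟩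

lemma Finv_monoOn (hm : IsMarg m) : MonotoneOn (Finv m) (Set.Iic 1) := by
  intro a _ b hb hab
  apply csInf_le_csInf ⟨0, fun _ hx => hx.1.1⟩
  · exact ⟨1, ⟨zero_le_one, le_refl 1⟩, by rw [Fcdf_one hm]; exact hb⟩
  · exact fun t htb => ⟨htb.1, le_trans hab htb.2⟩

lemma Finv_eq_min (hm : IsMarg m) {v : ℝ} (hv : v ≤ 1) : Finv m v = Finv m (min v 1) := by
  rw [min_eq_left hv]

lemma Finv_min_monotone (hm : IsMarg m) : Monotone (fun v => Finv m (min v 1)) := by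
  intro a b hab
  exact Finv_monoOn hm (min_le_right a 1) (min_le_right b 1) (min_le_min hab le_rfl)

lemma Finv_aemeas (hm : IsMarg m) :
    AEMeasurable (Finv m) (volume.restrict (Set.Ioc (0:ℝ) 1)) := by
  refine ⟨fun v => Finv m (min v 1), (Finv_min_monotone hm).measurable, ?_⟩
  rw [Filter.EventuallyEq, ae_restrict_iff' measurableSet_Ioc]
  exact Filter.Eventually.of_forall fun u hu => (Finv_eq_min hm hu.2)

lemma map_eq (hm : IsMarg m) :
    Measure.map (Finv m) (volume.restrict (Set.Ioc (0:ℝ) 1)) =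
      Measure.map (fun ω => 1 - m ω) (cubeMeasure n) := by
  have hXm : Measurable fun ω : Fin n → ℝ => 1 - m ω := measurable_const.sub hm.1
  refine Measure.ext_of_Iic _ _ (fun t => ?_)
  rw [Measure.map_apply_of_aemeasurable (Finv_aemeas hm) measurableSet_Iic,
      Measure.map_apply hXm measurableSet_Iic,
      Measure.restrict_apply' measurableSet_Ioc]
  rcases lt_or_ge t 0 with ht | ht
  · have h1 : Finv m ⁻¹' Iic t ∩ Ioc 0 1 = ∅ := by
      ext u
      simp only [mem_inter_iff, mem_preimage, mem_Iic, mem_Ioc, mem_empty_iff_false, iff_false,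
        not_and]
      intro h1
      linarith [Finv_nonneg (m := m) u]
    have h2 : ((fun ω : Fin n → ℝ => 1 - m ω) ⁻¹' Iic t) = ∅ := by
      ext ω
      simp only [mem_preimage, mem_Iic, mem_empty_iff_false, iff_false, not_le]
      linarith [(hm.2 ω).2]
    rw [h1, h2]
    simp
  rcases le_or_gt 1 t with ht1 | ht1
  · have h1 : Finv m ⁻¹' Iic t ∩ Ioc 0 1 = Ioc 0 1 :=
      inter_eq_right.2 (fun u hu => le_trans (Finv_le_one hm hu.2) ht1)
    have h2 : ((fun ω : Fin n → ℝ => 1 - m ω) ⁻¹' Iic t) = univ := by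
      ext ω
      simp only [mem_preimage, mem_Iic, mem_univ, iff_true]
      linarith [(hm.2 ω).1]
    rw [h1, h2, measure_univ, Real.volume_Ioc]
    simp
  · have h1 : Finv m ⁻¹' Iic t ∩ Ioc 0 1 = Ioc 0 (Fcdf m t) := by
      ext u
      simp only [mem_inter_iff, mem_preimage, mem_Iic, mem_Ioc]
      constructor
      · rintro ⟨hle, hu0, hu1⟩
        exact ⟨hu0, (Finv_le_iff hm hu1 ⟨ht, ht1.le⟩).1 hle⟩
      · rintro ⟨hu0, huF⟩
        have hu1 : u ≤ 1 := le_trans huF (Fcdf_le_one t)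
        exact ⟨(Finv_le_iff hm hu1 ⟨ht, ht1.le⟩).2 huF, hu0, hu1⟩
    rw [h1, Real.volume_Ioc, sub_zero, Fcdf, ENNReal.ofReal_toReal (measure_ne_top _ _)]
    rfl

lemma cov (hm : IsMarg m) {g : ℝ → ℝ} (hg : Continuous g) :
    ∫ u in Set.Ioc (0:ℝ) 1, g (Finv m u) = ∫ ω, g (1 - m ω) ∂(cubeMeasure n) := by
  have h1 : ∫ u in Set.Ioc (0:ℝ) 1, g (Finv m u) =
      ∫ x, g x ∂(Measure.map (Finv m) (volume.restrict (Set.Ioc (0:ℝ) 1))) :=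
    (integral_map (Finv_aemeas hm) (hg.measurable.aestronglyMeasurable)).symm
  rw [h1, map_eq hm, integral_map ((show Measurable fun ω : Fin n → ℝ => 1 - m ω from measurable_const.sub hm.1).aemeasurable)
      hg.measurable.aestronglyMeasurable]

lemma integrable_bdd {f : (Fin n → ℝ) → ℝ} (hf : Measurable f) {C : ℝ}
    (hbd : ∀ ω, |f ω| ≤ C) : Integrable f (cubeMeasure n) :=
  (integrable_const C).mono' hf.aestronglyMeasurable
    (Filter.Eventually.of_forall (by simpa [Real.norm_eq_abs] using hbd))

lemma lhs_isGreatest (hm : IsMarg m) :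
    IsGreatest {x : ℝ | ∃ s, IsSeg s ∧ x = Accu m s}
      (∫ ω, max (m ω) (1 - m ω) ∂(cubeMeasure n)) := by
  constructor
  · refine ⟨fun ω => if (1:ℝ)/2 ≤ m ω then 1 else 0,
      ⟨Measurable.ite (measurableSet_le measurable_const hm.1) measurable_const
        measurable_const, fun ω => ?_⟩, ?_⟩
    · by_cases h : (1:ℝ)/2 ≤ m ω
      · exact Or.inr (if_pos h)
      · exact Or.inl (if_neg h)
    · rw [Accu]
      refine integral_congr_ae (Filter.Eventually.of_forall (fun ω => ?_))
      by_cases h : (1:ℝ)/2 ≤ m ω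
      · simp only [if_pos h]
        rw [max_eq_left (by linarith : 1 - m ω ≤ m ω)]
        ring
      · push_neg at h
        simp only [if_neg (not_le.2 h)]
        rw [max_eq_right (by linarith : m ω ≤ 1 - m ω)]
        ring
  · rintro x ⟨s, hs, rfl⟩
    rw [Accu]
    have hmeas : Measurable fun ω => s ω * m ω + (1 - s ω) * (1 - m ω) :=
      ((hs.1.mul hm.1).add ((measurable_const.sub hs.1).mul (measurable_const.sub hm.1)))
    have hbd : ∀ ω, |s ω * m ω + (1 - s ω) * (1 - m ω)| ≤ 1 := by
      intro ω
      obtain ⟨h0, h1⟩ := hm.2 ω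
      rcases hs.2 ω with h | h <;> rw [h] <;> rw [abs_le] <;> constructor <;> linarith
    have hbd2 : ∀ ω, |max (m ω) (1 - m ω)| ≤ 1 := by
      intro ω
      obtain ⟨h0, h1⟩ := hm.2 ω
      rw [abs_le]
      constructor
      · linarith [le_max_left (m ω) (1 - m ω)]
      · exact max_le h1 (by linarith)
    refine integral_mono (integrable_bdd hmeas hbd)
      (integrable_bdd (hm.1.max (measurable_const.sub hm.1)) hbd2) (fun ω => ?_)
    obtain ⟨h0, h1⟩ := hm.2 ω
    rcases hs.2 ω with h | h <;> rw [h]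
    · simpa using le_max_right (m ω) (1 - m ω)
    · simpa using le_max_left (m ω) (1 - m ω)

lemma finv_ii (hm : IsMarg m) {a b : ℝ} (ha : a ∈ Set.Icc (0:ℝ) 1) (hb : b ∈ Set.Icc (0:ℝ) 1) :
    IntervalIntegrable (Finv m) volume a b :=
  MonotoneOn.intervalIntegrable (((Finv_monoOn hm).mono
    (fun x hx => hx.2 : Set.Icc (0:ℝ) 1 ⊆ Set.Iic 1)).mono (uIcc_subset_Icc ha hb))

lemma h_ii (hm : IsMarg m) {a b : ℝ} (ha : a ∈ Set.Icc (0:ℝ) 1) (hb : b ∈ Set.Icc (0:ℝ) 1) :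
    IntervalIntegrable (fun u => 1 - 2 * Finv m u) volume a b :=
  (intervalIntegrable_const).sub ((finv_ii hm ha hb).const_mul 2)

lemma hAntiOn (hm : IsMarg m) :
    AntitoneOn (fun u => 1 - 2 * Finv m u) (Set.Icc (0:ℝ) 1) := by
  intro a haa b hbb hab
  have hmono := (Finv_monoOn hm) (haa.2 : a ∈ Set.Iic 1) (hbb.2 : b ∈ Set.Iic 1) hab
  show 1 - 2 * Finv m b ≤ 1 - 2 * Finv m a
  linarith

lemma hpAntiOn (hm : IsMarg m) :
    AntitoneOn (fun u => max (1 - 2 * Finv m u) 0) (Set.Icc (0:ℝ) 1) :=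
  fun x hxx y hyy hxy => max_le_max (hAntiOn hm hxx hyy hxy) le_rfl

lemma hp_ii (hm : IsMarg m) {a b : ℝ} (ha : a ∈ Set.Icc (0:ℝ) 1) (hb : b ∈ Set.Icc (0:ℝ) 1) :
    IntervalIntegrable (fun u => max (1 - 2 * Finv m u) 0) volume a b :=
  AntitoneOn.intervalIntegrable ((hpAntiOn hm).mono (uIcc_subset_Icc ha hb))

lemma aFun_eq (hm : IsMarg m) {v : ℝ} (hv : v ∈ Set.Icc (0:ℝ) 1) :
    aFun m v = (∫ ω, (1 - m ω) ∂(cubeMeasure n)) + ∫ u in (0:ℝ)..v, (1 - 2 * Finv m u) := by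
  have h0 : (0:ℝ) ∈ Set.Icc (0:ℝ) 1 := ⟨le_rfl, zero_le_one⟩
  have hEX : ∫ ω, (1 - m ω) ∂(cubeMeasure n) = 1 - vol m := by
    rw [integral_sub (integrable_const 1) (integrable_bdd (C := 1) hm.1
      (fun ω => abs_le.2 ⟨by linarith [(hm.2 ω).1], (hm.2 ω).2⟩))]
    simp [vol]
  have hInt : ∫ u in (0:ℝ)..v, (1 - 2 * Finv m u) =
      v - 2 * ∫ u in (0:ℝ)..v, Finv m u := by
    rw [intervalIntegral.integral_sub intervalIntegrable_const
      ((finv_ii hm h0 hv).const_mul 2), intervalIntegral.integral_const_mul]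
    simp
  rw [hEX, hInt, aFun]
  ring

lemma rhs_isGreatest (hm : IsMarg m) :
    IsGreatest {x : ℝ | ∃ v ∈ Set.Icc (0:ℝ) 1, x = aFun m v}
      (∫ ω, max (m ω) (1 - m ω) ∂(cubeMeasure n)) := by
  have h0 : (0:ℝ) ∈ Set.Icc (0:ℝ) 1 := ⟨le_rfl, zero_le_one⟩
  have h1 : (1:ℝ) ∈ Set.Icc (0:ℝ) 1 := ⟨zero_le_one, le_rfl⟩
  set EX : ℝ := ∫ ω, (1 - m ω) ∂(cubeMeasure n) with hEXdef
  have hM : ∫ ω, max (m ω) (1 - m ω) ∂(cubeMeasure n) =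
      EX + ∫ ω, max (1 - 2 * (1 - m ω)) 0 ∂(cubeMeasure n) := by
    have hpt : ∀ ω, max (m ω) (1 - m ω) = (1 - m ω) + max (1 - 2 * (1 - m ω)) 0 := by
      intro ω
      rcases le_total (m ω) (1 - m ω) with h | h
      · rw [max_eq_right h, max_eq_right (by linarith)]
        ring
      · rw [max_eq_left h, max_eq_left (by linarith)]
        ring
    rw [integral_congr_ae (Filter.Eventually.of_forall hpt)]
    refine integral_add (integrable_bdd (C := 1) (measurable_const.sub hm.1)
      (fun ω => abs_le.2 ⟨by linarith [(hm.2 ω).2], by linarith [(hm.2 ω).1]⟩)) ?_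
    refine integrable_bdd (C := 1) ((measurable_const.sub
      (measurable_const.mul (measurable_const.sub hm.1))).max measurable_const) (fun ω => ?_)
    obtain ⟨ha, hb⟩ := hm.2 ω
    rw [abs_le]
    exact ⟨by linarith [le_max_right (1 - 2 * (1 - m ω)) (0:ℝ)],
      max_le (by linarith) zero_le_one⟩
  have hcov : ∫ u in Set.Ioc (0:ℝ) 1, max (1 - 2 * Finv m u) 0 =
      ∫ ω, max (1 - 2 * (1 - m ω)) 0 ∂(cubeMeasure n) :=
    cov hm ((continuous_const.sub (continuous_const.mul continuous_id)).max continuous_const)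
  set T : Set ℝ := insert (0:ℝ) {u | u ∈ Set.Icc (0:ℝ) 1 ∧ 0 < 1 - 2 * Finv m u} with hTdef
  have hT0 : (0:ℝ) ∈ T := mem_insert _ _
  have hTbdd : BddAbove T := by
    refine ⟨1, ?_⟩
    rintro x (rfl | hx)
    · exact zero_le_one
    · exact hx.1.2
  set v₀ : ℝ := sSup T with hv₀def
  have hv₀ : v₀ ∈ Set.Icc (0:ℝ) 1 := by
    constructor
    · exact le_csSup hTbdd hT0
    · refine csSup_le ⟨0, hT0⟩ ?_
      rintro x (rfl | hx)
      · exact zero_le_one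
      · exact hx.1.2
  have hpos : ∀ u ∈ Set.Ioo (0:ℝ) v₀, 0 < 1 - 2 * Finv m u := by
    rintro u ⟨hu0, huv⟩
    obtain ⟨w, hw, huw⟩ := exists_lt_of_lt_csSup ⟨0, hT0⟩ huv
    rcases hw with rfl | hw
    · linarith
    · have hu1 : u ≤ 1 := le_trans huw.le hw.1.2
      have hmono := (Finv_monoOn hm) (hu1 : u ∈ Set.Iic 1) (hw.1.2 : w ∈ Set.Iic 1) huw.le
      have hw2 := hw.2
      linarith
  have hneg : ∀ u ∈ Set.Ioo v₀ (1:ℝ), 1 - 2 * Finv m u ≤ 0 := by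
    rintro u ⟨huv, hu1⟩
    by_contra hc
    push_neg at hc
    have hmem : u ∈ T := mem_insert_of_mem _ ⟨⟨le_trans hv₀.1 huv.le, hu1.le⟩, hc⟩
    linarith [le_csSup hTbdd hmem]
  have key1 : ∫ u in (0:ℝ)..v₀, (1 - 2 * Finv m u) =
      ∫ u in (0:ℝ)..v₀, max (1 - 2 * Finv m u) 0 := by
    rw [intervalIntegral.integral_of_le hv₀.1, intervalIntegral.integral_of_le hv₀.1,
      integral_Ioc_eq_integral_Ioo, integral_Ioc_eq_integral_Ioo]
    exact setIntegral_congr_fun measurableSet_Ioo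
      (fun u hu => (max_eq_left (hpos u hu).le).symm)
  have key2 : ∫ u in v₀..(1:ℝ), max (1 - 2 * Finv m u) 0 = 0 := by
    rw [intervalIntegral.integral_of_le hv₀.2, integral_Ioc_eq_integral_Ioo,
      setIntegral_congr_fun measurableSet_Ioo (fun u hu => max_eq_right (hneg u hu))]
    simp
  have hsplit : (∫ u in (0:ℝ)..v₀, max (1 - 2 * Finv m u) 0) +
      ∫ u in v₀..(1:ℝ), max (1 - 2 * Finv m u) 0 =
      ∫ u in (0:ℝ)..1, max (1 - 2 * Finv m u) 0 :=
    intervalIntegral.integral_add_adjacent_intervals (hp_ii hm h0 hv₀) (hp_ii hm hv₀ h1)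
  have hfull : ∫ u in (0:ℝ)..1, max (1 - 2 * Finv m u) 0 =
      ∫ u in Set.Ioc (0:ℝ) 1, max (1 - 2 * Finv m u) 0 :=
    intervalIntegral.integral_of_le zero_le_one
  have hbig : ∫ u in (0:ℝ)..v₀, (1 - 2 * Finv m u) =
      ∫ ω, max (1 - 2 * (1 - m ω)) 0 ∂(cubeMeasure n) := by
    rw [key1, ← hcov, ← hfull, ← hsplit, key2, add_zero]
  constructor
  · exact ⟨v₀, hv₀, by rw [aFun_eq hm hv₀, hbig, hM]⟩
  · rintro x ⟨v, hv, rfl⟩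
    rw [aFun_eq hm hv, hM]
    refine add_le_add_right ?_ EX
    calc ∫ u in (0:ℝ)..v, (1 - 2 * Finv m u)
        ≤ ∫ u in (0:ℝ)..v, max (1 - 2 * Finv m u) 0 :=
          intervalIntegral.integral_mono_on hv.1 (h_ii hm h0 hv) (hp_ii hm h0 hv)
            (fun u _ => le_max_left _ _)
      _ ≤ ∫ u in (0:ℝ)..1, max (1 - 2 * Finv m u) 0 := by
          rw [← intervalIntegral.integral_add_adjacent_intervals (hp_ii hm h0 hv)
            (hp_ii hm hv h1)]
          have hnn : 0 ≤ ∫ u in v..(1:ℝ), max (1 - 2 * Finv m u) 0 :=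
            intervalIntegral.integral_nonneg hv.2 (fun u _ => le_max_right _ _)
          linarith
      _ = ∫ ω, max (1 - 2 * (1 - m ω)) 0 ∂(cubeMeasure n) := by rw [hfull, hcov]

theorem stmt4 {n : ℕ} {m : (Fin n → ℝ) → ℝ} (hm : IsMarg m) :
    sSup {x : ℝ | ∃ s, IsSeg s ∧ x = Accu m s} =
      sSup {x : ℝ | ∃ v ∈ Set.Icc (0:ℝ) 1, x = aFun m v} := by
  rw [(lhs_isGreatest hm).csSup_eq, (rhs_isGreatest hm).csSup_eq]

end
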